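/- The general solution of the ODE −S''(s) − (s/(1+s²)) S'(s) − (2/(1+s²)²) S(s) = 1 with initial conditions S(0) = c₁, S'(0) = c₂ is S(s) = (c₁ − s²/4) + (s/√(1+s²))·(c₂ − (c₁ + 1/4)·arcsinh(s)). In particular, this formula defines a function satisfying the ODE for all s ∈ ℝ. -/

import Mathlib

open Real

private lemma aux_pos (s : ℝ) : (0:ℝ) < 1 + s ^ 2 := by positivity

private lemma sqrt1_pos (s : ℝ) : 0 < Real.sqrt (1 + s ^ 2) :=
  Real.sqrt_pos.2 (aux_pos s)

private lemma sq_sqrt1 (s : ℝ) : Real.sqrt (1 + s ^ 2) ^ 2 = 1 + s ^ 2 :=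
  Real.sq_sqrt (aux_pos s).le

private lemma hasDerivAt_sqrt1 (s : ℝ) :
    HasDerivAt (fun s : ℝ => Real.sqrt (1 + s ^ 2)) (s / Real.sqrt (1 + s ^ 2)) s := by
  have h1 : HasDerivAt (fun s : ℝ => 1 + s ^ 2) (2 * s) s := by
    simpa using (hasDerivAt_pow 2 s).const_add 1
  have h2 := (Real.hasDerivAt_sqrt (aux_pos s).ne').comp s h1
  have h3 : s / Real.sqrt (1 + s ^ 2) = 1 / (2 * Real.sqrt (1 + s ^ 2)) * (2 * s) := by
    have := sqrt1_pos s
    field_simp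
  rw [h3]
  exact h2

/-- first derivative -/
private noncomputable def D1 (c₁ c₂ s : ℝ) : ℝ :=
  -s/2 + (c₂ - (c₁ + 1/4) * Real.arsinh s) / (Real.sqrt (1 + s ^ 2) * (1 + s ^ 2))
    - (c₁ + 1/4) * s / (1 + s ^ 2)

private lemma hasDerivAt_S (c₁ c₂ s : ℝ) :
    HasDerivAt (fun s => (c₁ - s ^ 2 / 4) +
      (s / Real.sqrt (1 + s ^ 2)) * (c₂ - (c₁ + 1 / 4) * Real.arsinh s)) (D1 c₁ c₂ s) s := by
  have hr := sqrt1_pos s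
  have ha : HasDerivAt (fun s : ℝ => c₁ - s ^ 2 / 4) (-(s/2)) s := by
    have := ((hasDerivAt_pow 2 s).div_const 4).const_sub c₁
    refine this.congr_deriv (Eq.symm ?_)
    ring
  have hg : HasDerivAt (fun s : ℝ => s / Real.sqrt (1 + s ^ 2))
      ((1 * Real.sqrt (1 + s ^ 2) - s * (s / Real.sqrt (1 + s ^ 2))) / Real.sqrt (1 + s ^ 2) ^ 2) s :=
    (hasDerivAt_id s).div (hasDerivAt_sqrt1 s) hr.ne'
  have hh : HasDerivAt (fun s : ℝ => c₂ - (c₁ + 1/4) * Real.arsinh s)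
      (-((c₁ + 1/4) * (Real.sqrt (1 + s ^ 2))⁻¹)) s :=
    ((Real.hasDerivAt_arsinh s).const_mul (c₁ + 1/4)).const_sub c₂
  have h := ha.add (hg.mul hh)
  refine h.congr_deriv (Eq.symm ?_)
  unfold D1
  rw [sq_sqrt1]
  set r := Real.sqrt (1 + s ^ 2) with hrdef
  have hr2 : (1:ℝ) + s ^ 2 = r ^ 2 := (sq_sqrt1 s).symm
  rw [hr2]
  field_simp
  linear_combination (8 * c₂ - 8 * c₁ * Real.arsinh s - 2 * Real.arsinh s) * hr2

/-- second derivative -/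
private noncomputable def D2 (c₁ c₂ s : ℝ) : ℝ :=
  -(1/2) + (-(c₁ + 1/4) * (1 + s ^ 2) - 3 * s * Real.sqrt (1 + s ^ 2) * (c₂ - (c₁ + 1/4) * Real.arsinh s)) / (1 + s ^ 2) ^ 3
    - (c₁ + 1/4) * (1 - s ^ 2) / (1 + s ^ 2) ^ 2

private lemma hasDerivAt_D1 (c₁ c₂ s : ℝ) :
    HasDerivAt (fun s => D1 c₁ c₂ s) (D2 c₁ c₂ s) s := by
  have hr := sqrt1_pos s
  have hq := aux_pos s
  have h1 : HasDerivAt (fun s : ℝ => -s/2) (-(1/2) : ℝ) s := by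
    have := (hasDerivAt_id s).neg.div_const 2
    refine this.congr_deriv (Eq.symm ?_)
    norm_num
  have hden : HasDerivAt (fun s : ℝ => Real.sqrt (1 + s ^ 2) * (1 + s ^ 2))
      ((s / Real.sqrt (1 + s ^ 2)) * (1 + s ^ 2) + Real.sqrt (1 + s ^ 2) * (2 * s)) s := by
    have hq' : HasDerivAt (fun s : ℝ => 1 + s ^ 2) (2 * s) s := by
      simpa using (hasDerivAt_pow 2 s).const_add 1
    exact (hasDerivAt_sqrt1 s).mul hq'
  have hnum : HasDerivAt (fun s : ℝ => c₂ - (c₁ + 1/4) * Real.arsinh s)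
      (-((c₁ + 1/4) * (Real.sqrt (1 + s ^ 2))⁻¹)) s :=
    ((Real.hasDerivAt_arsinh s).const_mul (c₁ + 1/4)).const_sub c₂
  have h2 := hnum.div hden (by positivity)
  have hq' : HasDerivAt (fun s : ℝ => 1 + s ^ 2) (2 * s) s := by
    simpa using (hasDerivAt_pow 2 s).const_add 1
  have h3 := (((hasDerivAt_id s).const_mul (c₁ + 1/4)).div hq' hq.ne')
  have h := (h1.add h2).sub h3
  refine h.congr_deriv (Eq.symm ?_)
  unfold D2
  set r := Real.sqrt (1 + s ^ 2) with hrdef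
  have hr2 : (1:ℝ) + s ^ 2 = r ^ 2 := (sq_sqrt1 s).symm
  rw [hr2]
  simp only [id]
  field_simp
  linear_combination (-(r * (2 + 8 * c₁))) * hr2

/-- The solution of the ODE `−S'' − (s/(1+s²)) S' − (2/(1+s²)²) S = 1` with
`S(0) = c₁`, `S'(0) = c₂` is
`S(s) = (c₁ − s²/4) + (s/√(1+s²))·(c₂ − (c₁ + 1/4)·arcsinh s)`; in particular this
formula satisfies the ODE for all `s ∈ ℝ`. -/
theorem jacobi_ode_general_solution (c₁ c₂ : ℝ) (S : ℝ → ℝ)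
    (hS : S = fun s => (c₁ - s ^ 2 / 4) +
      (s / Real.sqrt (1 + s ^ 2)) * (c₂ - (c₁ + 1 / 4) * Real.arsinh s)) :
    S 0 = c₁ ∧ deriv S 0 = c₂ ∧
    ∀ s : ℝ, -(deriv (deriv S) s) - (s / (1 + s ^ 2)) * deriv S s
        - (2 / (1 + s ^ 2) ^ 2) * S s = 1 := by
  have hd1 : deriv S = fun s => D1 c₁ c₂ s := by
    funext s
    rw [hS]
    exact (hasDerivAt_S c₁ c₂ s).deriv
  have hd2 : ∀ s, deriv (deriv S) s = D2 c₁ c₂ s := by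
    intro s
    rw [hd1]
    exact (hasDerivAt_D1 c₁ c₂ s).deriv
  refine ⟨by simp [hS], ?_, ?_⟩
  · rw [hd1]
    simp [D1]
  · intro s
    rw [hd2, hd1, hS]
    simp only [D1, D2]
    have hr := sqrt1_pos s
    have hq := aux_pos s
    set r := Real.sqrt (1 + s ^ 2) with hrdef
    have hr2 : (1:ℝ) + s ^ 2 = r ^ 2 := (sq_sqrt1 s).symm
    rw [hr2]
    field_simp
    linear_combination (4 * r * (1 + r ^ 2)) * hr2
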